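/- arXiv:math-ph/0312023 — 4 statements merged into one kernel-verified Lean document; each statement's English description precedes it below -/
import Mathlib

section
/- Let c₀ > 0, let c, f : ℝ → ℝ be continuous with f bounded and c(t) ≥ c₀ for all t ∈ ℝ, and let u : ℝ → ℝ be a bounded differentiable function satisfying u'(t) + c(t)·u(t) = f(t) for all t ∈ ℝ. Then for every t ∈ ℝ the improper integral ∫_{-∞}^{t} f(s)·exp(−∫_{s}^{t} c(τ) dτ) ds converges absolutely and u(t) = ∫_{-∞}^{t} f(s)·exp(−∫_{s}^{t} c(τ) dτ) ds. -/
open MeasureTheory Filter Set intervalIntegral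

lemma exp_mul_integrableOn_Iic (c₀ t : ℝ) (hc₀ : 0 < c₀) :
    IntegrableOn (fun s : ℝ => Real.exp (c₀ * s)) (Set.Iic t) volume := by
  refine integrableOn_Iic_of_intervalIntegral_norm_bounded
    (Real.exp (c₀ * t) / c₀) t (fun y => ?_) tendsto_id
    (Filter.Eventually.of_forall fun y => ?_)
  · exact ((Real.continuous_exp.comp (continuous_const.mul continuous_id)).intervalIntegrable _ _).1
  · have : ∀ s : ℝ, ‖Real.exp (c₀ * s)‖ = Real.exp (c₀ * s) := fun s =>
      Real.norm_of_nonneg (Real.exp_pos _).le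
    simp_rw [this]
    rw [intervalIntegral.integral_comp_mul_left (fun x => Real.exp x) hc₀.ne']
    rw [integral_exp, smul_eq_mul]
    rw [div_eq_inv_mul]
    have h1 : Real.exp (c₀ * t) - Real.exp (c₀ * y) ≤ Real.exp (c₀ * t) := by
      have := (Real.exp_pos (c₀ * y)).le; linarith
    exact mul_le_mul_of_nonneg_left h1 (inv_pos.mpr hc₀).le

/-- Representation formula for bounded solutions of `u' + c u = f` on the real line:
`u t = ∫_{-∞}^t f s · exp (−∫_s^t c τ dτ) ds`, the integral converging absolutely. -/
theorem stmt_0 (c₀ : ℝ) (hc₀ : 0 < c₀) (c f : ℝ → ℝ)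
    (hc_cont : Continuous c) (hf_cont : Continuous f)
    (hf_bdd : ∃ M : ℝ, ∀ t : ℝ, |f t| ≤ M)
    (hc_lb : ∀ t : ℝ, c₀ ≤ c t)
    (u : ℝ → ℝ) (hu_diff : Differentiable ℝ u)
    (hu_bdd : ∃ M : ℝ, ∀ t : ℝ, |u t| ≤ M)
    (hu_eq : ∀ t : ℝ, deriv u t + c t * u t = f t) :
    ∀ t : ℝ,
      IntegrableOn (fun s : ℝ => f s * Real.exp (-∫ τ in s..t, c τ)) (Set.Iic t) volume ∧
      u t = ∫ s in Set.Iic t, f s * Real.exp (-∫ τ in s..t, c τ) := by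
  intro t
  obtain ⟨Mf, hMf⟩ := hf_bdd
  obtain ⟨Mu, hMu⟩ := hu_bdd
  set F : ℝ → ℝ := fun s => ∫ τ in s..t, c τ with hF
  -- derivative of F
  have hF_deriv : ∀ s : ℝ, HasDerivAt F (-(c s)) s := fun s =>
    intervalIntegral.integral_hasDerivAt_left (hc_cont.intervalIntegrable s t)
      (hc_cont.aestronglyMeasurable.stronglyMeasurableAtFilter) hc_cont.continuousAt
  have hF_cont : Continuous F := by
    have : Differentiable ℝ F := fun s => (hF_deriv s).differentiableAt
    exact this.continuous
  -- lower bound on F on Iic t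
  have hF_lb : ∀ s ∈ Set.Iic t, c₀ * (t - s) ≤ F s := by
    intro s hs
    have h1 : (∫ τ in s..t, (c₀ : ℝ)) ≤ ∫ τ in s..t, c τ :=
      intervalIntegral.integral_mono_on hs (intervalIntegrable_const)
        (hc_cont.intervalIntegrable s t) fun x _ => hc_lb x
    rwa [intervalIntegral.integral_const, smul_eq_mul, mul_comm] at h1
  -- continuity of the integrand
  have hcont_int : Continuous (fun s : ℝ => f s * Real.exp (-F s)) :=
    hf_cont.mul (Real.continuous_exp.comp hF_cont.neg)
  -- pointwise bound of integrand on Iic t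
  have hbound : ∀ s ∈ Set.Iic t,
      ‖f s * Real.exp (-F s)‖ ≤ Mf * Real.exp (c₀ * (s - t)) := by
    intro s hs
    have h1 : -F s ≤ c₀ * (s - t) := by
      have := hF_lb s hs; nlinarith
    have h2 : Real.exp (-F s) ≤ Real.exp (c₀ * (s - t)) := Real.exp_le_exp.2 h1
    rw [norm_mul, Real.norm_eq_abs, Real.norm_eq_abs, Real.abs_exp]
    exact mul_le_mul (hMf s) h2 (Real.exp_pos _).le
      ((abs_nonneg (f s)).trans (hMf s))
  -- integrability of the bound
  have hexp : IntegrableOn (fun s : ℝ => Mf * Real.exp (c₀ * (s - t))) (Set.Iic t) volume := by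
    have h1 := (exp_mul_integrableOn_Iic c₀ t hc₀).mul_const (Real.exp (-(c₀ * t)))
    have h2 := h1.const_mul Mf
    refine IntegrableOn.congr_fun h2 (fun s _ => ?_) measurableSet_Iic
    rw [← Real.exp_add]; ring_nf
  -- integrability of the integrand
  have hInt : IntegrableOn (fun s : ℝ => f s * Real.exp (-F s)) (Set.Iic t) volume := by
    refine Integrable.mono' hexp (hcont_int.aestronglyMeasurable.restrict) ?_
    exact (ae_restrict_iff' measurableSet_Iic).mpr (Filter.Eventually.of_forall hbound)
  refine ⟨hInt, ?_⟩
  -- the function g and its derivative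
  set g : ℝ → ℝ := fun s => u s * Real.exp (-F s) with hg
  have hg_deriv : ∀ s : ℝ, HasDerivAt g (f s * Real.exp (-F s)) s := by
    intro s
    have h1 : HasDerivAt (fun s => Real.exp (-F s)) (Real.exp (-F s) * c s) s := by
      have := ((hF_deriv s).neg).exp
      simpa using this
    have h2 := ((hu_diff s).hasDerivAt).mul h1
    refine h2.congr_deriv ?_
    rw [← hu_eq s]; ring
  -- FTC on intervals
  have hFTC : ∀ a : ℝ, (∫ s in a..t, f s * Real.exp (-F s)) = u t - g a := by
    intro a
    have := intervalIntegral.integral_eq_sub_of_hasDerivAt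
      (f := g) (f' := fun s => f s * Real.exp (-F s)) (a := a) (b := t)
      (fun s _ => hg_deriv s) (hcont_int.intervalIntegrable a t)
    rw [this]
    have hFt : F t = 0 := intervalIntegral.integral_same
    simp [hg, hFt]
  -- g tends to 0 at -∞
  have hzero : Tendsto g atBot (nhds 0) := by
    rw [tendsto_zero_iff_norm_tendsto_zero]
    have hbnd : ∀ᶠ a in atBot, ‖g a‖ ≤ Mu * Real.exp (c₀ * (a - t)) := by
      filter_upwards [Filter.Iic_mem_atBot t] with a ha
      have h1 : -F a ≤ c₀ * (a - t) := by have := hF_lb a ha; nlinarith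
      rw [hg]
      simp only [norm_mul, Real.norm_eq_abs, Real.abs_exp]
      exact mul_le_mul (hMu a) (Real.exp_le_exp.2 h1) (Real.exp_pos _).le
        ((abs_nonneg (u a)).trans (hMu a))
    have hlim : Tendsto (fun a : ℝ => Mu * Real.exp (c₀ * (a - t))) atBot (nhds 0) := by
      have h1 : Tendsto (fun a : ℝ => c₀ * (a - t)) atBot atBot := by
        apply Tendsto.const_mul_atBot hc₀
        exact tendsto_atBot_add_const_right _ (-t) tendsto_id
      have h2 := Real.tendsto_exp_atBot.comp h1
      simpa using h2.const_mul Mu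
    exact squeeze_zero' (Filter.Eventually.of_forall fun a => norm_nonneg _) hbnd hlim
  -- pass to the limit
  have T1 : Tendsto (fun a : ℝ => ∫ s in a..t, f s * Real.exp (-F s)) atBot
      (nhds (∫ s in Set.Iic t, f s * Real.exp (-F s))) :=
    intervalIntegral_tendsto_integral_Iic t hInt tendsto_id
  have T2 : Tendsto (fun a : ℝ => ∫ s in a..t, f s * Real.exp (-F s)) atBot
      (nhds (u t)) := by
    simp_rw [hFTC]
    simpa using (tendsto_const_nhds (x := u t)).sub hzero
  exact tendsto_nhds_unique T2 T1
end

section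
/- Let m ≥ 1, let B be an m×m real symmetric positive-definite matrix, and let κ ∈ ℝ with κ ≠ 0. Then there is no twice continuously differentiable function v : ℝᵐ → ℝ such that v is bounded, its gradient ∇v is bounded, and −(∑_{i=1}^{m} ∂²v/∂x_i²)(x) + ⟨Bx, ∇v(x)⟩ = κ for every x ∈ ℝᵐ (⟨·,·⟩ the Euclidean inner product). -/
open Filter Topology
open scoped RealInnerProductSpace

/-- 1D second derivative test: at a local minimum of a `C²` function the second
derivative is nonnegative. -/
lemma aux13_second_deriv_nonneg {g : ℝ → ℝ} (hg : ContDiff ℝ 2 g) (h : IsLocalMin g 0) :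
    0 ≤ deriv (deriv g) 0 := by
  by_contra hneg
  push_neg at hneg
  have hg1 : ContDiff ℝ 1 (deriv g) := by
    have h12 : ((1 : WithTop ℕ∞) + 1) = 2 := by norm_num
    have hg' : ContDiff ℝ ((1 : WithTop ℕ∞) + 1) g := h12 ▸ hg
    exact (contDiff_succ_iff_deriv.mp hg').2.2
  have hd : HasDerivAt (deriv g) (deriv (deriv g) 0) 0 :=
    ((hg1.differentiable one_ne_zero) 0).hasDerivAt
  have hg0 : deriv g 0 = 0 := h.deriv_eq_zero
  have hslope : Tendsto (slope (deriv g) 0) (𝓝[≠] (0:ℝ)) (𝓝 (deriv (deriv g) 0)) :=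
    hasDerivAt_iff_tendsto_slope.mp hd
  have hev : ∀ᶠ t in 𝓝[>] (0:ℝ), slope (deriv g) 0 t < 0 := by
    have := hslope.eventually (eventually_lt_nhds hneg)
    exact this.filter_mono (nhdsWithin_mono _ fun x hx => ne_of_gt hx)
  obtain ⟨δ, hδ, hsub⟩ := mem_nhdsGT_iff_exists_Ioo_subset.mp hev
  rw [Set.mem_Ioi] at hδ
  obtain ⟨εr, hεr, hmin⟩ := Metric.eventually_nhds_iff.mp h
  set c : ℝ := min δ εr / 2 with hc
  have hcpos : 0 < c := by positivity
  have hcδ : c < δ := by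
    have : min δ εr ≤ δ := min_le_left _ _
    simp only [hc]; linarith
  have hcε : c < εr := by
    have : min δ εr ≤ εr := min_le_right _ _
    simp only [hc]; linarith
  have hderivneg : ∀ t ∈ Set.Ioo (0:ℝ) c, deriv g t < 0 := by
    intro t ht
    have htδ : t ∈ Set.Ioo (0:ℝ) δ := ⟨ht.1, ht.2.trans hcδ⟩
    have hs := hsub htδ
    rw [Set.mem_setOf_eq, slope_def_field, hg0] at hs
    have : (deriv g t - 0) / (t - 0) < 0 := by
      simpa [div_eq_mul_inv] using hs
    rw [sub_zero, sub_zero] at this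
    rcases div_neg_iff.mp this with ⟨_, h2⟩ | ⟨h1, _⟩
    · linarith [ht.1]
    · exact h1
  have hanti : StrictAntiOn g (Set.Icc 0 c) := by
    apply strictAntiOn_of_deriv_neg (convex_Icc 0 c) (hg.continuous.continuousOn)
    intro x hx
    rw [interior_Icc] at hx
    exact hderivneg x hx
  have hlt : g c < g 0 :=
    hanti (Set.left_mem_Icc.mpr hcpos.le) (Set.right_mem_Icc.mpr hcpos.le) hcpos
  have hge : g 0 ≤ g c := by
    apply hmin
    rw [Real.dist_eq, sub_zero, abs_of_pos hcpos]
    exact hcε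
  linarith

/-- Directional second derivative along a line. -/
lemma aux13_deriv2_line {m : ℕ} {w : EuclideanSpace ℝ (Fin m) → ℝ} (hw : ContDiff ℝ 2 w)
    (x₀ e : EuclideanSpace ℝ (Fin m)) :
    deriv (deriv (fun t : ℝ => w (x₀ + t • e))) 0
      = fderiv ℝ (fun y => fderiv ℝ w y e) x₀ e := by
  have hwd : Differentiable ℝ w := hw.differentiable two_ne_zero
  have hL : ∀ t : ℝ, HasDerivAt (fun s : ℝ => x₀ + s • e) e t := fun t => by
    simpa using ((hasDerivAt_id t).smul_const e).const_add x₀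
  have hderiv : deriv (fun t : ℝ => w (x₀ + t • e)) = fun t => fderiv ℝ w (x₀ + t • e) e := by
    funext t
    exact ((hwd (x₀ + t • e)).hasFDerivAt.comp_hasDerivAt t (hL t)).deriv
  rw [hderiv]
  have hF : Differentiable ℝ (fun y => fderiv ℝ w y e) :=
    ((hw.fderiv_right (m := 1) (by norm_num)).differentiable one_ne_zero).clm_apply (differentiable_const e)
  have hcomp : HasDerivAt (fun t : ℝ => fderiv ℝ w (x₀ + t • e) e)
      (fderiv ℝ (fun y => fderiv ℝ w y e) (x₀ + (0:ℝ) • e) e) 0 :=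
    by have := ((hF (x₀ + (0:ℝ) • e)).hasFDerivAt).comp_hasDerivAt 0 (hL 0); exact this
  rw [hcomp.deriv]
  norm_num

/-- At a local minimum of a `C²` function all pure second directional derivatives
are nonnegative. -/
lemma aux13_min_dir {m : ℕ} {w : EuclideanSpace ℝ (Fin m) → ℝ} (hw : ContDiff ℝ 2 w)
    {x₀ : EuclideanSpace ℝ (Fin m)} (h : IsLocalMin w x₀) (e : EuclideanSpace ℝ (Fin m)) :
    0 ≤ fderiv ℝ (fun y => fderiv ℝ w y e) x₀ e := by
  rw [← aux13_deriv2_line hw x₀ e]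
  apply aux13_second_deriv_nonneg
  · exact hw.comp (contDiff_const.add (contDiff_id.smul contDiff_const))
  · have hc : ContinuousAt (fun t : ℝ => x₀ + t • e) 0 :=
      (continuous_const.add (continuous_id.smul continuous_const)).continuousAt
    have h' : IsLocalMin w ((fun t : ℝ => x₀ + t • e) 0) := by
      simpa using h
    exact IsLocalMin.comp_continuous (f := w) (g := fun t : ℝ => x₀ + t • e) (b := (0:ℝ)) h' hc

/-- Core contradiction: no bounded solution for positive `κ`. -/
lemma aux13_core {m : ℕ} (A : EuclideanSpace ℝ (Fin m) → EuclideanSpace ℝ (Fin m))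
    (hA : ∀ x, 0 ≤ ⟪x, A x⟫) {κ : ℝ} (hκ : 0 < κ)
    (v : EuclideanSpace ℝ (Fin m) → ℝ) (hv : ContDiff ℝ 2 v)
    (C : ℝ) (hb : ∀ x, |v x| ≤ C)
    (hpde : ∀ x : EuclideanSpace ℝ (Fin m),
      -(∑ i : Fin m, fderiv ℝ (fun y => fderiv ℝ v y (EuclideanSpace.single i 1))
          x (EuclideanSpace.single i 1))
        + fderiv ℝ v x (A x) = κ) : False := by
  set ε : ℝ := κ / (4 * (m + 1)) with hε
  have h4 : (0:ℝ) < 4 * (m + 1) := by positivity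
  have hεpos : 0 < ε := by positivity
  set q : EuclideanSpace ℝ (Fin m) → ℝ := fun x => ⟪x, x⟫ with hq
  set w : EuclideanSpace ℝ (Fin m) → ℝ := fun x => v x + ε * q x with hwdef
  have hqc : ContDiff ℝ 2 q := contDiff_id.inner ℝ contDiff_id
  have hwc : ContDiff ℝ 2 w := hv.add (contDiff_const.mul hqc)
  have hqdiff : Differentiable ℝ q := hqc.differentiable two_ne_zero
  have hvdiff : Differentiable ℝ v := hv.differentiable two_ne_zero
  -- coercivity and existence of a global minimum
  have hcoer : Tendsto w (cocompact _) atTop := by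
    have h1 : Tendsto (fun r : ℝ => -C + ε * r ^ 2) atTop atTop := by
      apply tendsto_atTop_add_const_left
      exact (tendsto_pow_atTop two_ne_zero).const_mul_atTop hεpos
    have h2 : Tendsto (fun x : EuclideanSpace ℝ (Fin m) => -C + ε * ‖x‖ ^ 2)
        (cocompact _) atTop := h1.comp tendsto_norm_cocompact_atTop
    apply tendsto_atTop_mono _ h2
    intro x
    have hbx := (abs_le.mp (hb x)).1
    have hqx : q x = ‖x‖ ^ 2 := real_inner_self_eq_norm_sq x
    simp only [hwdef, hqx]
    linarith
  obtain ⟨x₀, hx₀⟩ := hwc.continuous.exists_forall_le hcoer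
  have hmin : IsLocalMin w x₀ := Filter.Eventually.of_forall hx₀
  -- first derivative of w
  have hqd : ∀ x u, fderiv ℝ q x u = 2 * ⟪x, u⟫ := by
    intro x u
    have : fderiv ℝ (fun t : EuclideanSpace ℝ (Fin m) => ⟪id t, id t⟫) x u
        = ⟪id x, fderiv ℝ (id : EuclideanSpace ℝ (Fin m) → _) x u⟫
          + ⟪fderiv ℝ (id : EuclideanSpace ℝ (Fin m) → _) x u, id x⟫ :=
      fderiv_inner_apply ℝ differentiableAt_id differentiableAt_id u
    simp only [fderiv_id, fderiv_id', ContinuousLinearMap.coe_id', id_eq] at this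
    rw [hq, this, real_inner_comm u x]
    ring
  have hwder : ∀ x u, fderiv ℝ w x u = fderiv ℝ v x u + ε * (2 * ⟪x, u⟫) := by
    intro x u
    have hcm : fderiv ℝ (fun y => ε * q y) x = ε • fderiv ℝ q x := fderiv_const_mul (hqdiff x) ε
    have hsum : fderiv ℝ w x = fderiv ℝ v x + fderiv ℝ (fun y => ε * q y) x :=
      fderiv_add (hvdiff x) ((hqdiff x).const_mul ε)
    rw [hsum, hcm]
    simp only [ContinuousLinearMap.add_apply, ContinuousLinearMap.coe_smul',
      Pi.smul_apply, smul_eq_mul, hqd x u]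
  have hgrad0 : fderiv ℝ w x₀ = 0 := hmin.fderiv_eq_zero
  have h1 : fderiv ℝ v x₀ (A x₀) ≤ 0 := by
    have hthis := hwder x₀ (A x₀)
    rw [hgrad0] at hthis
    simp only [ContinuousLinearMap.zero_apply] at hthis
    nlinarith [hA x₀, hεpos]
  -- second derivatives
  have hFv : ∀ e : EuclideanSpace ℝ (Fin m), Differentiable ℝ (fun y => fderiv ℝ v y e) :=
    fun e => ((hv.fderiv_right (m := 1) (by norm_num)).differentiable one_ne_zero).clm_apply
      (differentiable_const e)
  have h2 : ∀ i : Fin m, -(2*ε) ≤ fderiv ℝ (fun y => fderiv ℝ v y (EuclideanSpace.single i 1))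
      x₀ (EuclideanSpace.single i 1) := by
    intro i
    set e : EuclideanSpace ℝ (Fin m) := EuclideanSpace.single i (1:ℝ) with he
    have hee : ⟪e, e⟫ = 1 := by
      rw [real_inner_self_eq_norm_sq]
      simp [he, EuclideanSpace.norm_single]
    have hkey : (fun y => fderiv ℝ w y e) = fun y => fderiv ℝ v y e + (2*ε) * ⟪y, e⟫ := by
      funext y
      rw [hwder y e]
      ring
    -- derivative of the inner-product part
    have hinn : ∀ y u, fderiv ℝ (fun z : EuclideanSpace ℝ (Fin m) => ⟪z, e⟫) y u
        = ⟪u, e⟫ := by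
      intro y u
      have : fderiv ℝ (fun t : EuclideanSpace ℝ (Fin m) =>
          ⟪id t, (fun _ => e) t⟫) y u
          = ⟪id y, fderiv ℝ (fun _ : EuclideanSpace ℝ (Fin m) => e) y u⟫
            + ⟪fderiv ℝ (id : EuclideanSpace ℝ (Fin m) → _) y u, (fun _ => e) y⟫ :=
        fderiv_inner_apply ℝ differentiableAt_id (differentiableAt_const e) u
      simpa using this
    have hinndiff : Differentiable ℝ (fun z : EuclideanSpace ℝ (Fin m) => ⟪z, e⟫) :=
      differentiable_id.inner ℝ (differentiable_const e)
    have hsplit : fderiv ℝ (fun y => fderiv ℝ w y e) x₀ e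
        = fderiv ℝ (fun y => fderiv ℝ v y e) x₀ e + 2*ε := by
      rw [hkey]
      have hadd : fderiv ℝ (fun y => fderiv ℝ v y e + (2*ε) * ⟪y, e⟫) x₀
          = fderiv ℝ (fun y => fderiv ℝ v y e) x₀
            + fderiv ℝ (fun y => (2*ε) * ⟪y, e⟫) x₀ :=
        fderiv_add (hFv e x₀) ((hinndiff x₀).const_mul (2*ε))
      rw [hadd]
      have hcm : fderiv ℝ (fun y => (2*ε) * ⟪y, e⟫) x₀
          = (2*ε) • fderiv ℝ (fun z : EuclideanSpace ℝ (Fin m) => ⟪z, e⟫) x₀ :=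
        fderiv_const_mul (hinndiff x₀) (2*ε)
      rw [ContinuousLinearMap.add_apply, hcm]
      simp only [ContinuousLinearMap.coe_smul', Pi.smul_apply, smul_eq_mul, hinn x₀ e, hee]
      ring
    have hpos := aux13_min_dir hwc hmin e
    rw [hsplit] at hpos
    linarith
  -- combine with the PDE at x₀
  have hsumge : -(2*ε*m) ≤ ∑ i : Fin m,
      fderiv ℝ (fun y => fderiv ℝ v y (EuclideanSpace.single i 1)) x₀
        (EuclideanSpace.single i 1) := by
    calc -(2*ε*m) = ∑ _i : Fin m, -(2*ε) := by
          simp [Finset.sum_const, Finset.card_univ]; ring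
      _ ≤ _ := Finset.sum_le_sum fun i _ => h2 i
  have hpde0 := hpde x₀
  have hεD : ε * (4 * (m + 1)) = κ := div_mul_cancel₀ _ (ne_of_gt h4)
  have hmn : (0:ℝ) ≤ m := Nat.cast_nonneg m
  nlinarith [mul_nonneg hεpos.le hmn]

/-- Nonexistence of bounded solutions with bounded gradient of
`Δₑ v + ⟨Bx, ∇v⟩ = κ` on `ℝᵐ` (with `Δₑ = −∑ ∂²/∂xᵢ²`) when `B` is symmetric
positive definite and `κ ≠ 0`. -/
theorem stmt_13 (m : ℕ) (hm : 1 ≤ m) (B : Matrix (Fin m) (Fin m) ℝ)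
    (hB_symm : B.IsSymm) (hB_pos : B.PosDef) (κ : ℝ) (hκ : κ ≠ 0) :
    ¬ ∃ v : EuclideanSpace ℝ (Fin m) → ℝ,
        ContDiff ℝ 2 v ∧
        (∃ C : ℝ, ∀ x, |v x| ≤ C) ∧
        (∃ C : ℝ, ∀ x, ‖fderiv ℝ v x‖ ≤ C) ∧
        (∀ x : EuclideanSpace ℝ (Fin m),
          -(∑ i : Fin m, fderiv ℝ (fun y => fderiv ℝ v y (EuclideanSpace.single i 1))
              x (EuclideanSpace.single i 1))
            + fderiv ℝ v x (Matrix.toEuclideanLin B x) = κ) := by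
  rintro ⟨v, hv, ⟨C, hb⟩, -, hpde⟩
  set A : EuclideanSpace ℝ (Fin m) → EuclideanSpace ℝ (Fin m) :=
    fun x => Matrix.toEuclideanLin B x with hAdef
  have hA : ∀ x, 0 ≤ ⟪x, A x⟫ := by
    intro x
    have hps := hB_pos.posSemidef.dotProduct_mulVec_nonneg ((WithLp.equiv 2 (Fin m → ℝ)) x)
    simpa [hAdef, Matrix.toEuclideanLin_apply, PiLp.inner_apply, dotProduct,
      RCLike.inner_apply, mul_comm] using hps
  rcases hκ.lt_or_gt with hneg | hpos
  · apply aux13_core A hA (κ := -κ) (by linarith) (fun x => -(v x)) hv.neg C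
      (fun x => by simpa [abs_neg] using hb x)
    intro x
    have e1 : ∀ (y : EuclideanSpace ℝ (Fin m)) u,
        fderiv ℝ (fun z => -(v z)) y u = -(fderiv ℝ v y u) := by
      intro y u; rw [fderiv_fun_neg]; simp
    have e2 : ∀ i : Fin m,
        fderiv ℝ (fun y => fderiv ℝ (fun z => -(v z)) y (EuclideanSpace.single i 1)) x
          (EuclideanSpace.single i 1)
        = -(fderiv ℝ (fun y => fderiv ℝ v y (EuclideanSpace.single i 1)) x
            (EuclideanSpace.single i 1)) := by
      intro i
      have hfun : (fun y => fderiv ℝ (fun z => -(v z)) y (EuclideanSpace.single i 1))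
          = fun y => -(fderiv ℝ v y (EuclideanSpace.single i 1)) :=
        funext fun y => e1 y _
      rw [hfun, fderiv_fun_neg]; simp
    have hx := hpde x
    have hsum : ∑ i : Fin m, fderiv ℝ (fun y => fderiv ℝ (fun z => -(v z)) y
          (EuclideanSpace.single i 1)) x (EuclideanSpace.single i 1)
        = -∑ i : Fin m, fderiv ℝ (fun y => fderiv ℝ v y (EuclideanSpace.single i 1)) x
            (EuclideanSpace.single i 1) := by
      rw [← Finset.sum_neg_distrib]
      exact Finset.sum_congr rfl fun i _ => e2 i
    rw [hsum, e1 x (A x)]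
    linarith
  · exact aux13_core A hA hpos v hv C hb hpde
end

section
/- Let c > 0, u₀ ∈ ℝ, L ∈ ℝ, and let g : ℝ → ℝ be a bounded continuous function such that (1/t)·∫_{0}^{t} g(s) ds → L as t → +∞. Define u(t) = u₀·e^{−ct} + ∫_{0}^{t} g(τ)·e^{−c(t−τ)} dτ. Then (1/t)·∫_{0}^{t} u(s) ds → L/c as t → +∞. -/
open MeasureTheory Filter

/-- Averaging along trajectories: if the Birkhoff averages of `g` tend to `L`, then
the time averages of `u(t) = u₀ e^{−ct} + ∫₀ᵗ g(τ) e^{−c(t−τ)} dτ` tend to `L / c`. -/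
theorem stmt_17 (c u₀ L : ℝ) (hc : 0 < c) (g : ℝ → ℝ)
    (hg_cont : Continuous g) (hg_bdd : ∃ M : ℝ, ∀ t : ℝ, |g t| ≤ M)
    (hg_avg : Tendsto (fun t : ℝ => (1 / t) * ∫ s in (0:ℝ)..t, g s) atTop (nhds L))
    (u : ℝ → ℝ)
    (hu : ∀ t : ℝ, u t = u₀ * Real.exp (-c * t)
        + ∫ τ in (0:ℝ)..t, g τ * Real.exp (-c * (t - τ))) :
    Tendsto (fun t : ℝ => (1 / t) * ∫ s in (0:ℝ)..t, u s) atTop (nhds (L / c)) := by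
  obtain ⟨M, hM⟩ := hg_bdd
  have hM0 : 0 ≤ M := le_trans (abs_nonneg _) (hM 0)
  have hcont : Continuous fun τ => g τ * Real.exp (c * τ) :=
    hg_cont.mul (Real.continuous_exp.comp (continuous_const.mul continuous_id))
  set H : ℝ → ℝ := fun t => ∫ τ in (0:ℝ)..t, g τ * Real.exp (c * τ) with hHdef
  have hHderiv : ∀ t, HasDerivAt H (g t * Real.exp (c * t)) t := fun t =>
    (hcont.integral_hasStrictDerivAt 0 t).hasDerivAt
  have hHcont : Continuous H :=
    continuous_iff_continuousAt.mpr fun t => (hHderiv t).continuousAt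
  -- representation u t = exp (-c t) * (u₀ + H t)
  have hurep : ∀ t, u t = Real.exp (-c * t) * (u₀ + H t) := by
    intro t
    rw [hu t]
    have h1 : ∀ τ : ℝ, g τ * Real.exp (-c * (t - τ))
        = Real.exp (-c * t) * (g τ * Real.exp (c * τ)) := by
      intro τ
      rw [← mul_assoc, mul_comm (Real.exp (-c * t)) (g τ), mul_assoc, ← Real.exp_add]
      ring_nf
    simp only [h1]
    rw [intervalIntegral.integral_const_mul]
    ring
  have hucont : Continuous u := by
    have : Continuous fun t => Real.exp (-c * t) * (u₀ + H t) :=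
      (Real.continuous_exp.comp (continuous_const.mul continuous_id)).mul
        (continuous_const.add hHcont)
    exact (funext hurep : u = _) ▸ this
  -- u' = g - c u
  have huderiv : ∀ t, HasDerivAt u (g t - c * u t) t := by
    intro t
    have h1 : HasDerivAt (fun s => Real.exp (-c * s)) (Real.exp (-c * t) * (-c)) t := by
      have := ((hasDerivAt_id t).const_mul (-c)).exp
      simpa using this
    have h2 : HasDerivAt (fun s => u₀ + H s) (g t * Real.exp (c * t)) t :=
      (hHderiv t).const_add u₀
    have h3 : HasDerivAt (fun s => Real.exp (-c * s) * (u₀ + H s)) _ t := h1.mul h2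
    have heq : u = fun s => Real.exp (-c * s) * (u₀ + H s) := funext hurep
    rw [← heq] at h3
    convert h3 using 1
    rw [hurep t]
    have hexp : Real.exp (-c * t) * Real.exp (c * t) = 1 := by
      rw [← Real.exp_add]; ring_nf; exact Real.exp_zero
    linear_combination (-(g t)) * hexp
  have hu0 : u 0 = u₀ := by
    rw [hu 0]; simp
  -- key integral identity
  have key : ∀ t : ℝ, ∫ s in (0:ℝ)..t, u s
      = (u₀ + (∫ s in (0:ℝ)..t, g s) - u t) / c := by
    intro t
    have hrhs : Continuous fun s => g s - c * u s := hg_cont.sub (continuous_const.mul hucont)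
    have hftc := intervalIntegral.integral_eq_sub_of_hasDerivAt
      (fun s _ => huderiv s) (hrhs.intervalIntegrable 0 t)
    rw [intervalIntegral.integral_sub (hg_cont.intervalIntegrable 0 t)
      ((by fun_prop : Continuous fun s => c * u s).intervalIntegrable 0 t),
      intervalIntegral.integral_const_mul, hu0] at hftc
    field_simp
    linarith
  -- bound on u for t ≥ 0
  have hubdd : ∀ t : ℝ, 0 ≤ t → |u t| ≤ |u₀| + M / c := by
    intro t ht
    rw [hu t]
    have hb1 : |u₀ * Real.exp (-c * t)| ≤ |u₀| := by
      rw [abs_mul, Real.abs_exp]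
      have : Real.exp (-c * t) ≤ 1 := by
        apply Real.exp_le_one_iff.mpr
        nlinarith
      nlinarith [abs_nonneg u₀]
    have hb2 : |∫ τ in (0:ℝ)..t, g τ * Real.exp (-c * (t - τ))| ≤ M / c := by
      have habs := intervalIntegral.abs_integral_le_integral_abs
        (f := fun τ => g τ * Real.exp (-c * (t - τ))) (μ := volume) ht
      have hmono : (∫ τ in (0:ℝ)..t, |g τ * Real.exp (-c * (t - τ))|)
          ≤ ∫ τ in (0:ℝ)..t, M * Real.exp (-c * (t - τ)) := by
        apply intervalIntegral.integral_mono_on ht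
        · exact ((hg_cont.mul (by fun_prop)).abs).intervalIntegrable 0 t
        · exact (continuous_const.mul (by fun_prop)).intervalIntegrable 0 t
        · intro x _
          rw [abs_mul, Real.abs_exp]
          have := hM x
          nlinarith [Real.exp_pos (-c * (t - x))]
      have hcomp : (∫ τ in (0:ℝ)..t, M * Real.exp (-c * (t - τ)))
          = M / c - M / c * Real.exp (-c * t) := by
        have hder : ∀ τ ∈ Set.uIcc (0:ℝ) t,
            HasDerivAt (fun τ => M / c * Real.exp (-c * (t - τ)))
              (M * Real.exp (-c * (t - τ))) τ := by
          intro τ _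
          have h0 : HasDerivAt (fun τ : ℝ => -c * (t - τ)) c τ := by
            have := ((hasDerivAt_id τ).const_sub t).const_mul (-c)
            simpa using this
          have := (h0.exp).const_mul (M / c)
          refine this.congr_deriv ?_
          rw [div_mul_eq_mul_div, div_eq_iff hc.ne']
          ring
        have := intervalIntegral.integral_eq_sub_of_hasDerivAt hder
          ((continuous_const.mul (by fun_prop)).intervalIntegrable 0 t)
        rw [this]
        simp
      have hexp : 0 < Real.exp (-c * t) := Real.exp_pos _
      calc |∫ τ in (0:ℝ)..t, g τ * Real.exp (-c * (t - τ))| ≤ _ := habs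
        _ ≤ ∫ τ in (0:ℝ)..t, M * Real.exp (-c * (t - τ)) := hmono
        _ = M / c - M / c * Real.exp (-c * t) := hcomp
        _ ≤ M / c := by
            have : 0 ≤ M / c := div_nonneg hM0 hc.le
            nlinarith
    calc |u₀ * Real.exp (-c * t) + ∫ τ in (0:ℝ)..t, g τ * Real.exp (-c * (t - τ))|
        ≤ |u₀ * Real.exp (-c * t)| + |∫ τ in (0:ℝ)..t, g τ * Real.exp (-c * (t - τ))| :=
          abs_add_le _ _
      _ ≤ |u₀| + M / c := add_le_add hb1 hb2
  -- rewrite the averages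
  have heq : ∀ᶠ t in atTop, (1 / t) * ∫ s in (0:ℝ)..t, u s
      = (1 / c) * ((1 / t) * ∫ s in (0:ℝ)..t, g s) + (u₀ - u t) / (c * t) := by
    filter_upwards [eventually_gt_atTop (0:ℝ)] with t ht
    rw [key t]
    field_simp
    ring
  have hlim1 : Tendsto (fun t : ℝ => (1 / c) * ((1 / t) * ∫ s in (0:ℝ)..t, g s))
      atTop (nhds ((1 / c) * L)) := hg_avg.const_mul _
  have hlim2 : Tendsto (fun t : ℝ => (u₀ - u t) / (c * t)) atTop (nhds 0) := by
    refine squeeze_zero_norm' (a := fun t => (2 * |u₀| + M / c) / (c * t)) ?_ ?_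
    · filter_upwards [eventually_ge_atTop (1:ℝ)] with t ht
      have ht0 : (0:ℝ) < t := lt_of_lt_of_le one_pos ht
      have hct : 0 < c * t := mul_pos hc ht0
      rw [Real.norm_eq_abs, abs_div, abs_of_pos hct, div_le_div_iff₀ hct hct]
      have h1 : |u₀ - u t| ≤ 2 * |u₀| + M / c := by
        have := hubdd t ht0.le
        have := abs_sub u₀ (u t)
        calc |u₀ - u t| ≤ |u₀| + |u t| := abs_sub _ _
          _ ≤ 2 * |u₀| + M / c := by linarith [hubdd t ht0.le]
      nlinarith [abs_nonneg (u₀ - u t)]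
    · have h0 : Tendsto (fun t : ℝ => ((2 * |u₀| + M / c) / c) * t⁻¹) atTop
          (nhds (((2 * |u₀| + M / c) / c) * 0)) := tendsto_inv_atTop_zero.const_mul _
      rw [mul_zero] at h0
      refine h0.congr fun t => ?_
      rw [← div_div]
      exact (div_eq_mul_inv _ _).symm
  have := hlim1.add hlim2
  rw [add_zero] at this
  have hfin : (1 / c) * L = L / c := by ring
  rw [hfin] at this
  exact this.congr' (heq.mono fun t h => h.symm)
end

section
/- Let S be an m×m real symmetric positive-definite matrix and let A be an m×m real matrix with trace zero such that S·A is antisymmetric (i.e. (SA)ᵀ = −SA). Then for every continuously differentiable function v : ℝᵐ → ℝ such that v and its gradient ∇v are bounded, ∫_{ℝᵐ} e^{−⟨Sx, x⟩}·⟨Ax, ∇v(x)⟩ dx = 0, where ⟨·,·⟩ is the Euclidean inner product and the integral is with respect to Lebesgue measure (the integrand is absolutely integrable). -/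
open Matrix MeasureTheory RealInnerProductSpace

section st19aux

variable {m : ℕ}

/-- The continuous linear map of a matrix on Euclidean space. -/
noncomputable def st19T (S : Matrix (Fin m) (Fin m) ℝ) :
    EuclideanSpace ℝ (Fin m) →L[ℝ] EuclideanSpace ℝ (Fin m) :=
  LinearMap.toContinuousLinearMap (Matrix.toEuclideanLin S)

lemma st19T_apply (S : Matrix (Fin m) (Fin m) ℝ) (x : EuclideanSpace ℝ (Fin m)) (i : Fin m) :
    st19T S x i = (S *ᵥ x) i := rfl

lemma st19_antisym_dot (B : Matrix (Fin m) (Fin m) ℝ) (hB : Bᵀ = -B) (x : Fin m → ℝ) :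
    x ⬝ᵥ B *ᵥ x = 0 := by
  have h1 : x ⬝ᵥ B *ᵥ x = Bᵀ *ᵥ x ⬝ᵥ x := by
    rw [Matrix.dotProduct_mulVec, Matrix.mulVec_transpose]
  rw [hB] at h1
  simp only [Matrix.neg_mulVec, neg_dotProduct] at h1
  rw [dotProduct_comm (B *ᵥ x) x] at h1
  linarith

lemma st19_inner_dot (S : Matrix (Fin m) (Fin m) ℝ) (x : EuclideanSpace ℝ (Fin m)) :
    (⟪st19T S x, x⟫ : ℝ) = (S *ᵥ x) ⬝ᵥ x := by
  simp [st19T, PiLp.inner_apply, dotProduct, Matrix.toEuclideanLin_apply, mul_comm]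

lemma st19_inner_dot' (S : Matrix (Fin m) (Fin m) ℝ) (x y : EuclideanSpace ℝ (Fin m)) :
    (⟪x, st19T S y⟫ : ℝ) = x ⬝ᵥ (S *ᵥ y) := by
  simp [st19T, PiLp.inner_apply, dotProduct, Matrix.toEuclideanLin_apply]
  exact Finset.sum_congr rfl fun _ _ => mul_comm _ _

lemma st19_inner_dot'' (S : Matrix (Fin m) (Fin m) ℝ) (x y : EuclideanSpace ℝ (Fin m)) :
    (⟪st19T S x, y⟫ : ℝ) = (S *ᵥ x) ⬝ᵥ y := by
  simp [st19T, PiLp.inner_apply, dotProduct, Matrix.toEuclideanLin_apply, mul_comm]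

lemma st19_coord_le_norm (y : EuclideanSpace ℝ (Fin m)) (i : Fin m) : |y i| ≤ ‖y‖ := by
  have h : (y i : ℝ) = ⟪EuclideanSpace.single i (1:ℝ), y⟫ := by
    simp [EuclideanSpace.inner_single_left]
  rw [h]
  calc |⟪EuclideanSpace.single i (1:ℝ), y⟫| ≤ ‖EuclideanSpace.single i (1:ℝ)‖ * ‖y‖ :=
        abs_real_inner_le_norm _ _
    _ = ‖y‖ := by simp [EuclideanSpace.norm_single]

lemma st19_decomp (y : EuclideanSpace ℝ (Fin m)) (L : EuclideanSpace ℝ (Fin m) →L[ℝ] ℝ) :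
    L y = ∑ i, y i * L (EuclideanSpace.single i 1) := by
  conv_lhs => rw [← (EuclideanSpace.basisFun (Fin m) ℝ).sum_repr y]
  rw [map_sum]
  simp [EuclideanSpace.basisFun_apply, EuclideanSpace.basisFun_repr]

lemma st19_gauss {b : ℝ} (hb : 0 < b) :
    Integrable (fun x : EuclideanSpace ℝ (Fin m) => Real.exp (-b * ‖x‖^2)) := by
  have h := (GaussianFourier.integrable_cexp_neg_mul_sq_norm_add (V := EuclideanSpace ℝ (Fin m))
      (b := (b:ℂ)) (by simpa using hb) 0 (0 : EuclideanSpace ℝ (Fin m))).norm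
  convert h using 2 with x
  simp [Complex.norm_exp, ← Complex.ofReal_pow]

lemma st19_dom {c K0 K1 K2 : ℝ} (hc : 0 < c)
    {f : EuclideanSpace ℝ (Fin m) → ℝ} (hf : AEStronglyMeasurable f volume)
    (hbd : ∀ x, |f x| ≤ (K0 + K1 * ‖x‖ + K2 * ‖x‖^2) * Real.exp (-c * ‖x‖^2)) :
    Integrable f := by
  set M := |K0| + |K1| * (1 + 2/c) + |K2| * (2/c) with hM
  apply Integrable.mono' ((st19_gauss (half_pos hc)).const_mul M) hf
  filter_upwards with x
  set t := ‖x‖ with hts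
  have ht : (0:ℝ) ≤ t := norm_nonneg x
  set E := Real.exp (c/2 * t^2) with hE0
  have hE : 1 ≤ E := Real.one_le_exp (by positivity)
  have hE2 : c/2 * t^2 ≤ E := le_trans (by linarith [Real.add_one_le_exp (c/2 * t^2)]) le_rfl
  have ht2 : t^2 ≤ (2/c) * E := by
    rw [div_mul_eq_mul_div, le_div_iff₀ hc] at *
    nlinarith
  have hkey : K0 + K1 * t + K2 * t^2 ≤ M * E := by
    have h0 : K0 ≤ |K0| * E := le_trans (le_abs_self K0) (by nlinarith [abs_nonneg K0])
    have h1 : K1 * t ≤ |K1| * ((1 + 2/c) * E) := by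
      have ha : K1 * t ≤ |K1| * t := mul_le_mul_of_nonneg_right (le_abs_self K1) ht
      have hb' : t ≤ (1 + 2/c) * E := by nlinarith [sq_nonneg (t - 1), abs_nonneg K1]
      exact le_trans ha (mul_le_mul_of_nonneg_left hb' (abs_nonneg K1))
    have h2 : K2 * t^2 ≤ |K2| * ((2/c) * E) := by
      have ha : K2 * t^2 ≤ |K2| * t^2 := mul_le_mul_of_nonneg_right (le_abs_self K2) (sq_nonneg t)
      exact le_trans ha (mul_le_mul_of_nonneg_left ht2 (abs_nonneg K2))
    rw [hM]; ring_nf; ring_nf at h0 h1 h2; linarith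
  have hexp : Real.exp (-c * t^2) * E = Real.exp (-(c/2) * t^2) := by
    rw [hE0, ← Real.exp_add]; ring_nf
  calc ‖f x‖ = |f x| := rfl
    _ ≤ (K0 + K1 * t + K2 * t^2) * Real.exp (-c * t^2) := hbd x
    _ ≤ (M * E) * Real.exp (-c * t^2) :=
        mul_le_mul_of_nonneg_right hkey (le_of_lt (Real.exp_pos _))
    _ = M * Real.exp (-(c/2) * t^2) := by rw [mul_assoc, mul_comm E, hexp]
    _ = M * Real.exp (-(c/2) * ‖x‖^2) := rfl

lemma st19_posbound {S : Matrix (Fin m) (Fin m) ℝ} (hS_pos : S.PosDef) (hm : 0 < m) :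
    ∃ c > 0, ∀ x : EuclideanSpace ℝ (Fin m), c * ‖x‖^2 ≤ ⟪st19T S x, x⟫ := by
  haveI : Nontrivial (EuclideanSpace ℝ (Fin m)) :=
    ⟨⟨EuclideanSpace.single ⟨0, hm⟩ 1, 0, by
      intro h
      have := congrArg norm h
      simp [EuclideanSpace.norm_single] at this⟩⟩
  have hcont : Continuous fun x : EuclideanSpace ℝ (Fin m) => (⟪st19T S x, x⟫ : ℝ) :=
    (st19T S).continuous.inner continuous_id
  obtain ⟨x₀, hx₀s, hmin⟩ := (isCompact_sphere (0 : EuclideanSpace ℝ (Fin m)) 1).exists_isMinOn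
    (NormedSpace.sphere_nonempty.mpr zero_le_one) hcont.continuousOn
  have hx₀n : ‖x₀‖ = 1 := by simpa using mem_sphere_zero_iff_norm.mp hx₀s
  have hx₀ne : x₀ ≠ 0 := by
    intro h; rw [h] at hx₀n; simp at hx₀n
  have hpos : 0 < (⟪st19T S x₀, x₀⟫ : ℝ) := by
    rw [st19_inner_dot, dotProduct_comm]
    have := hS_pos.dotProduct_mulVec_pos (x := x₀.ofLp) (by
      intro h; apply hx₀ne
      simpa using congrArg (WithLp.toLp 2) h)
    simpa using this
  refine ⟨⟪st19T S x₀, x₀⟫, hpos, fun x => ?_⟩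
  rcases eq_or_ne x 0 with rfl | hx
  · simp
  · have hxn : (0:ℝ) < ‖x‖ := norm_pos_iff.mpr hx
    set y : EuclideanSpace ℝ (Fin m) := ‖x‖⁻¹ • x with hy
    have hyn : ‖y‖ = 1 := by
      rw [hy, norm_smul, norm_inv, norm_norm, inv_mul_cancel₀ (ne_of_gt hxn)]
    have hys : y ∈ Metric.sphere (0 : EuclideanSpace ℝ (Fin m)) 1 :=
      mem_sphere_zero_iff_norm.mpr hyn
    have hm' : (⟪st19T S x₀, x₀⟫ : ℝ) ≤ ⟪st19T S y, y⟫ := hmin hys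
    have hQy : (⟪st19T S y, y⟫ : ℝ) = (‖x‖^2)⁻¹ * ⟪st19T S x, x⟫ := by
      rw [hy, (st19T S).map_smul, real_inner_smul_left, real_inner_smul_right]
      rw [pow_two, mul_inv]; ring
    rw [hQy] at hm'
    calc (⟪st19T S x₀, x₀⟫:ℝ) * ‖x‖^2 ≤ ((‖x‖^2)⁻¹ * ⟪st19T S x, x⟫) * ‖x‖^2 :=
          mul_le_mul_of_nonneg_right hm' (by positivity)
      _ = ⟪st19T S x, x⟫ := by field_simp

end st19aux
set_option maxHeartbeats 1000000 in
/-- Vanishing of the Gaussian-weighted integral `∫ e^{−⟨Sx,x⟩} ⟨Ax, ∇v⟩ dx = 0`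
when `S` is symmetric positive definite, `tr A = 0` and `S·A` is antisymmetric. -/
theorem stmt_19 (m : ℕ) (S A : Matrix (Fin m) (Fin m) ℝ)
    (hS_symm : S.IsSymm) (hS_pos : S.PosDef)
    (hA_tr : Matrix.trace A = 0) (hSA : (S * A)ᵀ = -(S * A))
    (v : EuclideanSpace ℝ (Fin m) → ℝ) (hv : ContDiff ℝ 1 v)
    (hv_bdd : ∃ C : ℝ, ∀ x, |v x| ≤ C)
    (hdv_bdd : ∃ C : ℝ, ∀ x, ‖fderiv ℝ v x‖ ≤ C) :
    Integrable (fun x : EuclideanSpace ℝ (Fin m) =>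
        Real.exp (-⟪Matrix.toEuclideanLin S x, x⟫) *
          fderiv ℝ v x (Matrix.toEuclideanLin A x)) volume ∧
    ∫ x : EuclideanSpace ℝ (Fin m),
        Real.exp (-⟪Matrix.toEuclideanLin S x, x⟫) *
          fderiv ℝ v x (Matrix.toEuclideanLin A x) = 0 := by
  classical
  rcases Nat.eq_zero_or_pos m with hm0 | hm
  · -- trivial case `m = 0`
    haveI : Subsingleton (EuclideanSpace ℝ (Fin m)) :=
      ⟨fun a b => by ext i; have := i.2; omega⟩
    have hz : (fun x : EuclideanSpace ℝ (Fin m) =>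
        Real.exp (-⟪Matrix.toEuclideanLin S x, x⟫) *
          fderiv ℝ v x (Matrix.toEuclideanLin A x)) = fun _ => (0:ℝ) := by
      funext x
      have h0 : (Matrix.toEuclideanLin A) x = 0 := Subsingleton.elim _ _
      rw [h0, ContinuousLinearMap.map_zero, mul_zero]
    rw [hz]
    exact ⟨integrable_zero _ _ _, integral_zero _ _⟩
  obtain ⟨Cv, hCv⟩ := hv_bdd
  obtain ⟨Cd, hCd⟩ := hdv_bdd
  have hCv0 : 0 ≤ Cv := le_trans (abs_nonneg _) (hCv 0)
  have hCd0 : 0 ≤ Cd := le_trans (norm_nonneg _) (hCd 0)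
  obtain ⟨c, hc, hQlb⟩ := st19_posbound hS_pos hm
  set T := st19T S with hT
  set TA := st19T A with hTAdef
  set Q : EuclideanSpace ℝ (Fin m) → ℝ := fun x => ⟪T x, x⟫ with hQdef
  set Q' : EuclideanSpace ℝ (Fin m) → EuclideanSpace ℝ (Fin m) →L[ℝ] ℝ :=
    fun x => innerSL ℝ (T x) + (innerSL ℝ x).comp T with hQ'def
  have hQd : ∀ x, HasFDerivAt Q (Q' x) x := by
    intro x
    have h := (T.hasFDerivAt (x := x)).inner ℝ (hasFDerivAt_id x)
    refine h.congr_fderiv ?_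
    ext h'
    simp only [hQ'def]
    simp [fderivInnerCLM_apply, real_inner_comm, mul_comm]
  set g : EuclideanSpace ℝ (Fin m) → ℝ := fun x => Real.exp (-Q x) with hgdef
  set gd : EuclideanSpace ℝ (Fin m) → EuclideanSpace ℝ (Fin m) →L[ℝ] ℝ :=
    fun x => Real.exp (-Q x) • (-(Q' x)) with hgddef
  have hgd : ∀ x, HasFDerivAt g (gd x) x := fun x => ((hQd x).neg).exp
  have hgdiff : Differentiable ℝ g := fun x => (hgd x).differentiableAt
  have hgfd : ∀ x, fderiv ℝ g x = gd x := fun x => (hgd x).fderiv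
  have hQcont : Continuous Q := T.continuous.inner continuous_id
  have hgcont : Continuous g := Real.continuous_exp.comp hQcont.neg
  have hvcont : Continuous v := hv.continuous
  have hdvcont : Continuous fun x => fderiv ℝ v x := hv.continuous_fderiv one_ne_zero
  set e : Fin m → EuclideanSpace ℝ (Fin m) := fun i => EuclideanSpace.single i 1 with hedef
  have hene : ∀ i, ‖e i‖ = 1 := fun i => by
    simp [hedef, EuclideanSpace.norm_single]
  set ℓ : Fin m → EuclideanSpace ℝ (Fin m) →L[ℝ] ℝ :=
    fun i => (EuclideanSpace.proj i).comp TA with hℓdef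
  have hℓapp : ∀ i x, ℓ i x = TA x i := fun i x => rfl
  have hℓbd : ∀ i x, |ℓ i x| ≤ ‖TA‖ * ‖x‖ := fun i x =>
    (st19_coord_le_norm (TA x) i).trans (TA.le_opNorm x)
  set w : Fin m → EuclideanSpace ℝ (Fin m) → ℝ := fun i x => v x * ℓ i x with hwdef
  have hwd : ∀ i x, HasFDerivAt (w i) (v x • (ℓ i) + (ℓ i x) • fderiv ℝ v x) x := fun i x =>
    ((hv.differentiable one_ne_zero x).hasFDerivAt).mul ((ℓ i).hasFDerivAt)
  have hwdiff : ∀ i, Differentiable ℝ (w i) := fun i x => (hwd i x).differentiableAt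
  have hwfd : ∀ i x, fderiv ℝ (w i) x = v x • ℓ i + ℓ i x • fderiv ℝ v x :=
    fun i x => (hwd i x).fderiv
  have hwfda : ∀ i x, fderiv ℝ (w i) x (e i) = v x * ℓ i (e i) + TA x i * fderiv ℝ v x (e i) := by
    intro i x
    rw [hwfd i x]
    simp [hℓapp]
  -- bounds
  have hgbd : ∀ x, |g x| ≤ Real.exp (-c * ‖x‖^2) := by
    intro x
    simp only [hgdef]
    rw [abs_of_pos (Real.exp_pos _)]
    exact Real.exp_le_exp.mpr (by have := hQlb x; simp only [hQdef]; linarith)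
  have hQ'bd : ∀ x, ‖Q' x‖ ≤ 2 * ‖T‖ * ‖x‖ := by
    intro x
    simp only [hQ'def]
    refine (norm_add_le _ _).trans ?_
    have h1 : ‖innerSL ℝ (T x)‖ ≤ ‖T‖ * ‖x‖ := by
      rw [innerSL_apply_norm]; exact T.le_opNorm x
    have h2 : ‖(innerSL ℝ x).comp T‖ ≤ ‖x‖ * ‖T‖ := by
      refine (ContinuousLinearMap.opNorm_comp_le _ _).trans ?_
      rw [innerSL_apply_norm]
    linarith
  have hgdbd : ∀ x, ‖gd x‖ ≤ Real.exp (-c * ‖x‖^2) * (2 * ‖T‖ * ‖x‖) := by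
    intro x
    have h1 : ‖gd x‖ = Real.exp (-Q x) * ‖Q' x‖ := by
      simp only [hgddef]
      rw [norm_smul (Real.exp (-Q x)) (-Q' x), norm_neg, Real.norm_eq_abs,
        abs_of_pos (Real.exp_pos _)]
    rw [h1]
    have h2 : Real.exp (-Q x) ≤ Real.exp (-c * ‖x‖^2) := by
      have h3 := hgbd x
      simp only [hgdef] at h3
      rwa [abs_of_pos (Real.exp_pos _)] at h3
    exact mul_le_mul h2 (hQ'bd x) (norm_nonneg _) (le_of_lt (Real.exp_pos _))
  -- integrability
  have h1 : ∀ i, Integrable (fun x => g x * w i x) volume := by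
    intro i
    refine st19_dom (K0 := 0) (K1 := Cv * ‖TA‖) (K2 := 0) hc
      ((hgcont.mul (hvcont.mul (ℓ i).continuous)).aestronglyMeasurable) (fun x => ?_)
    have hb : |g x * w i x| ≤ Real.exp (-c * ‖x‖^2) * (Cv * (‖TA‖ * ‖x‖)) := by
      simp only [hwdef, abs_mul]
      exact mul_le_mul (hgbd x)
        (mul_le_mul (hCv x) (hℓbd i x) (abs_nonneg _) hCv0)
        (by positivity) (le_of_lt (Real.exp_pos _))
    calc |g x * w i x| ≤ Real.exp (-c * ‖x‖^2) * (Cv * (‖TA‖ * ‖x‖)) := hb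
      _ = (0 + Cv * ‖TA‖ * ‖x‖ + 0 * ‖x‖^2) * Real.exp (-c * ‖x‖^2) := by ring
  have h2 : ∀ i, Integrable (fun x => g x * fderiv ℝ (w i) x (e i)) volume := by
    intro i
    have hmeas : AEStronglyMeasurable
        (fun x => g x * fderiv ℝ (w i) x (e i)) volume := by
      have hrw : (fun x => g x * fderiv ℝ (w i) x (e i))
          = fun x => g x * (v x * ℓ i (e i) + TA x i * fderiv ℝ v x (e i)) :=
        funext fun x => by rw [hwfda i x]
      rw [hrw]
      refine (hgcont.mul ?_).aestronglyMeasurable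
      refine ((hvcont.mul continuous_const).add ?_)
      refine Continuous.mul ?_ ?_
      · exact (EuclideanSpace.proj i).continuous.comp TA.continuous
      · exact hdvcont.clm_apply continuous_const
    refine st19_dom (K0 := Cv * ‖TA‖) (K1 := ‖TA‖ * Cd) (K2 := 0) hc hmeas (fun x => ?_)
    have hb1 : |fderiv ℝ (w i) x (e i)| ≤ Cv * ‖TA‖ + ‖TA‖ * ‖x‖ * Cd := by
      rw [hwfda i x]
      refine (abs_add_le _ _).trans ?_
      have hc1 : |v x * ℓ i (e i)| ≤ Cv * ‖TA‖ := by
        rw [abs_mul]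
        have := (hℓbd i (e i))
        rw [hene i, mul_one] at this
        exact mul_le_mul (hCv x) this (abs_nonneg _) hCv0
      have hc2 : |TA x i * fderiv ℝ v x (e i)| ≤ ‖TA‖ * ‖x‖ * Cd := by
        rw [abs_mul]
        refine mul_le_mul ((st19_coord_le_norm (TA x) i).trans (TA.le_opNorm x)) ?_
          (abs_nonneg _) (by positivity)
        calc |fderiv ℝ v x (e i)| ≤ ‖fderiv ℝ v x‖ * ‖e i‖ := (fderiv ℝ v x).le_opNorm _
          _ = ‖fderiv ℝ v x‖ := by rw [hene i, mul_one]
          _ ≤ Cd := hCd x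
      linarith
    calc |g x * fderiv ℝ (w i) x (e i)| = |g x| * |fderiv ℝ (w i) x (e i)| := abs_mul _ _
      _ ≤ Real.exp (-c * ‖x‖^2) * (Cv * ‖TA‖ + ‖TA‖ * ‖x‖ * Cd) :=
          mul_le_mul (hgbd x) hb1 (abs_nonneg _) (le_of_lt (Real.exp_pos _))
      _ = (Cv * ‖TA‖ + ‖TA‖ * Cd * ‖x‖ + 0 * ‖x‖^2) * Real.exp (-c * ‖x‖^2) := by ring
  have h3 : ∀ i, Integrable (fun x => fderiv ℝ g x (e i) * w i x) volume := by
    intro i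
    have hmeas : AEStronglyMeasurable
        (fun x => fderiv ℝ g x (e i) * w i x) volume := by
      have hrw : (fun x => fderiv ℝ g x (e i) * w i x)
          = fun x => (Real.exp (-Q x) * (-(Q' x (e i)))) * (v x * ℓ i x) := by
        funext x
        rw [hgfd x]
        simp only [hgddef, ContinuousLinearMap.smul_apply, ContinuousLinearMap.neg_apply,
          smul_eq_mul]
        rfl
      rw [hrw]
      have hq'c : Continuous fun x => Q' x (e i) := by
        have : (fun x => Q' x (e i)) = fun x => (⟪T x, e i⟫ : ℝ) + ⟪x, T (e i)⟫ := by
          funext x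
          simp only [hQ'def]
          simp
        rw [this]
        exact (T.continuous.inner continuous_const).add (continuous_id.inner continuous_const)
      exact (((Real.continuous_exp.comp hQcont.neg).mul hq'c.neg).mul
        (hvcont.mul (ℓ i).continuous)).aestronglyMeasurable
    refine st19_dom (K0 := 0) (K1 := 0) (K2 := 2 * ‖T‖ * (Cv * ‖TA‖)) hc hmeas (fun x => ?_)
    have hb1 : |fderiv ℝ g x (e i)| ≤ Real.exp (-c * ‖x‖^2) * (2 * ‖T‖ * ‖x‖) := by
      rw [hgfd x]
      calc |gd x (e i)| ≤ ‖gd x‖ * ‖e i‖ := (gd x).le_opNorm _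
        _ = ‖gd x‖ := by rw [hene i, mul_one]
        _ ≤ Real.exp (-c * ‖x‖^2) * (2 * ‖T‖ * ‖x‖) := hgdbd x
    have hb2 : |w i x| ≤ Cv * (‖TA‖ * ‖x‖) := by
      simp only [hwdef, abs_mul]
      exact mul_le_mul (hCv x) (hℓbd i x) (abs_nonneg _) hCv0
    calc |fderiv ℝ g x (e i) * w i x| = |fderiv ℝ g x (e i)| * |w i x| := abs_mul _ _
      _ ≤ (Real.exp (-c * ‖x‖^2) * (2 * ‖T‖ * ‖x‖)) * (Cv * (‖TA‖ * ‖x‖)) :=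
          mul_le_mul hb1 hb2 (abs_nonneg _) (by positivity)
      _ = (0 + 0 * ‖x‖ + 2 * ‖T‖ * (Cv * ‖TA‖) * ‖x‖^2) * Real.exp (-c * ‖x‖^2) := by ring
  -- integration by parts in each direction
  have hIBP : ∀ i, ∫ x, g x * fderiv ℝ (w i) x (e i) = -∫ x, fderiv ℝ g x (e i) * w i x :=
    fun i => integral_mul_fderiv_eq_neg_fderiv_mul_of_integrable
      (h3 i) (h2 i) (h1 i) (fun x _ => hgdiff x) (fun x _ => hwdiff i x)
  -- trace vanishes
  have htr : ∑ i, ℓ i (e i) = 0 := by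
    have hdiag : ∀ i : Fin m, ℓ i (e i) = A i i := by
      intro i
      rw [hℓapp, hTAdef, hedef]
      show (Matrix.toEuclideanLin A (EuclideanSpace.single i 1)) i = A i i
      simp [Matrix.toEuclideanLin_apply, Matrix.mulVec_single]
    rw [Finset.sum_congr rfl fun i _ => hdiag i]
    simpa [Matrix.trace, Matrix.diag] using hA_tr
  -- the left-hand pointwise identity
  have keyL : ∀ x, Real.exp (-⟪Matrix.toEuclideanLin S x, x⟫) *
      fderiv ℝ v x (Matrix.toEuclideanLin A x) = ∑ i, g x * fderiv ℝ (w i) x (e i) := by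
    intro x
    have hstep : ∑ i, g x * fderiv ℝ (w i) x (e i)
        = g x * v x * (∑ i, ℓ i (e i)) + g x * (∑ i, TA x i * fderiv ℝ v x (e i)) := by
      simp only [hwfda, mul_add, Finset.sum_add_distrib]
      congr 1
      · rw [Finset.mul_sum]
        exact Finset.sum_congr rfl fun i _ => (mul_assoc _ _ _).symm
      · rw [Finset.mul_sum]
    rw [hstep, htr, mul_zero, zero_add]
    have hdec : ∑ i, TA x i * fderiv ℝ v x (e i) = fderiv ℝ v x (TA x) :=
      (st19_decomp (TA x) (fderiv ℝ v x)).symm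
    rw [hdec]
    rfl
  -- the right-hand pointwise vanishing
  have keyR : ∀ x, ∑ i, fderiv ℝ g x (e i) * w i x = 0 := by
    intro x
    have hstep : ∑ i, fderiv ℝ g x (e i) * w i x
        = v x * ∑ i, TA x i * fderiv ℝ g x (e i) := by
      rw [Finset.mul_sum]
      refine Finset.sum_congr rfl fun i _ => ?_
      simp only [hwdef, hℓapp]
      ring
    rw [hstep]
    have hdec : ∑ i, TA x i * fderiv ℝ g x (e i) = fderiv ℝ g x (TA x) :=
      (st19_decomp (TA x) (fderiv ℝ g x)).symm
    rw [hdec, hgfd x]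
    simp only [hgddef]
    have hz : Q' x (TA x) = 0 := by
      simp only [hQ'def]
      have e2 : (⟪T x, TA x⟫ : ℝ) = (S *ᵥ x) ⬝ᵥ (A *ᵥ (x : Fin m → ℝ)) := by
        rw [hT, st19_inner_dot'']
        rfl
      have e1 : (⟪x, T (TA x)⟫ : ℝ) = x ⬝ᵥ ((S * A) *ᵥ x) := by
        rw [hT, st19_inner_dot']
        congr 1
        show S *ᵥ (A *ᵥ (x : Fin m → ℝ)) = (S * A) *ᵥ x
        rw [Matrix.mulVec_mulVec]
      have e3 : (S *ᵥ (x : Fin m → ℝ)) ⬝ᵥ (A *ᵥ x) = x ⬝ᵥ ((S * A) *ᵥ x) := by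
        have hSx : S *ᵥ (x : Fin m → ℝ) = x ᵥ* S := by
          rw [← Matrix.mulVec_transpose, hS_symm.eq]
        rw [hSx, ← Matrix.dotProduct_mulVec, Matrix.mulVec_mulVec]
      have e0 : x ⬝ᵥ ((S * A) *ᵥ (x : Fin m → ℝ)) = 0 := st19_antisym_dot _ hSA x
      simp only [ContinuousLinearMap.add_apply, ContinuousLinearMap.comp_apply, innerSL_apply_apply]
      rw [e1, e2, e3, e0, add_zero]
    simp [hz]
  -- conclusion
  constructor
  · exact (integrable_finset_sum Finset.univ fun i _ => h2 i).congr
      (Filter.Eventually.of_forall fun x => (keyL x).symm)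
  · calc ∫ x : EuclideanSpace ℝ (Fin m), Real.exp (-⟪Matrix.toEuclideanLin S x, x⟫) *
          fderiv ℝ v x (Matrix.toEuclideanLin A x)
        = ∫ x, ∑ i, g x * fderiv ℝ (w i) x (e i) :=
          integral_congr_ae (Filter.Eventually.of_forall keyL)
      _ = ∑ i, ∫ x, g x * fderiv ℝ (w i) x (e i) := integral_finset_sum _ fun i _ => h2 i
      _ = ∑ i, -∫ x, fderiv ℝ g x (e i) * w i x := Finset.sum_congr rfl fun i _ => hIBP i
      _ = -∑ i, ∫ x, fderiv ℝ g x (e i) * w i x := by rw [Finset.sum_neg_distrib]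
      _ = -∫ x, ∑ i, fderiv ℝ g x (e i) * w i x := by
          rw [integral_finset_sum _ fun i _ => h3 i]
      _ = 0 := by
          rw [integral_congr_ae (Filter.Eventually.of_forall keyR)]
          simp
end
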